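/- For every ε₂ with 0 < ε₂ < 1, there exists N₂ such that for all integers n, Δ with n ≥ Δ > N₂, at least (1 − ε₂)·n! of the permutations of [n] are (Δ, ε₂)-balanced. -/

import Mathlib

attribute [local instance] Classical.propDecidable

set_option maxHeartbeats 1000000

open Finset Equiv

/-- A permutation `π` of `[n]` (modelled as `Fin n`) is `(Δ, ε)`-balanced if for every
`0 ≤ k ≤ n` we have `|[Δ] ∩ Π_k| ≥ (k/n − ε)·Δ`, where `Π_k` is the set of the first `k`
entries of `π` and `[Δ]` is the set of the first `Δ` vertices. -/
def IsBalanced (n Δ : ℕ) (ε : ℝ) (π : Equiv.Perm (Fin n)) : Prop :=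
  ∀ k : ℕ, k ≤ n →
    ((k : ℝ) / n - ε) * Δ ≤
      ((Finset.univ.filter fun v : Fin n =>
          (v : ℕ) < Δ ∧ (π.symm v : ℕ) < k).card : ℝ)

lemma card_filter_coe_lt (n Δ : ℕ) (h : Δ ≤ n) :
    (univ.filter fun v : Fin n => (v:ℕ) < Δ).card = Δ := by
  rw [← Finset.card_range Δ]
  apply Finset.card_nbij (fun v : Fin n => (v : ℕ))
  · intro a ha; simp at ha ⊢; exact ha
  · intro a _ b _ hab; exact Fin.val_injective hab
  · intro m hm
    simp only [coe_range, Set.mem_Iio, Finset.coe_filter] at hm ⊢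
    exact ⟨⟨m, lt_of_lt_of_le hm h⟩, by simpa using hm, rfl⟩

lemma fiber_one (n : ℕ) (j v : Fin n) :
    (univ.filter fun π : Perm (Fin n) => π j = v).card = (n-1).factorial := by
  have hconst : ∀ v w : Fin n,
      (univ.filter fun π : Perm (Fin n) => π j = v).card =
      (univ.filter fun π : Perm (Fin n) => π j = w).card := by
    intro v w
    apply Finset.card_equiv (Equiv.mulLeft (Equiv.swap v w))
    intro π
    simp only [mem_filter, mem_univ, true_and, Equiv.coe_mulLeft, Perm.mul_apply]
    constructor
    · rintro rfl; exact Equiv.swap_apply_left _ _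
    · intro hw
      exact (Equiv.swap v w).injective (hw.trans (Equiv.swap_apply_left v w).symm)
  have hsum : (Finset.univ : Finset (Perm (Fin n))).card
      = ∑ w : Fin n, (univ.filter fun π : Perm (Fin n) => π j = w).card :=
    Finset.card_eq_sum_card_fiberwise (fun π _ => Finset.mem_univ (π j))
  have hcard : (Finset.univ : Finset (Perm (Fin n))).card = n.factorial := by
    rw [Finset.card_univ, Fintype.card_perm, Fintype.card_fin]
  have hn : 0 < n := j.pos
  have key : n.factorial = n * (univ.filter fun π : Perm (Fin n) => π j = v).card := by
    rw [← hcard, hsum]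
    rw [Finset.sum_congr rfl (fun w _ => hconst w v)]
    simp [Finset.card_univ, mul_comm]
  obtain ⟨m, rfl⟩ := Nat.exists_eq_succ_of_ne_zero hn.ne'
  have hfac : (m+1).factorial = (m+1) * m.factorial := rfl
  simp only [Nat.succ_sub_one]
  exact (Nat.eq_of_mul_eq_mul_left m.succ_pos (hfac ▸ key)).symm

lemma fiber_two (n : ℕ) {j l v w : Fin n} (hjl : j ≠ l) (hvw : v ≠ w) :
    (univ.filter fun π : Perm (Fin n) => π j = v ∧ π l = w).card = (n-2).factorial := by
  have hconst : ∀ w w' : Fin n, w ≠ v → w' ≠ v →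
      (univ.filter fun π : Perm (Fin n) => π j = v ∧ π l = w).card =
      (univ.filter fun π : Perm (Fin n) => π j = v ∧ π l = w').card := by
    intro w w' hw hw'
    apply Finset.card_equiv (Equiv.mulLeft (Equiv.swap w w'))
    intro π
    simp only [mem_filter, mem_univ, true_and, Equiv.coe_mulLeft, Perm.mul_apply]
    constructor
    · rintro ⟨rfl, rfl⟩
      exact ⟨Equiv.swap_apply_of_ne_of_ne (Ne.symm hw) (Ne.symm hw'),
        Equiv.swap_apply_left _ _⟩
    · rintro ⟨h1, h2⟩
      have hinj := (Equiv.swap w w').injective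
      constructor
      · apply hinj
        rw [h1]
        exact (Equiv.swap_apply_of_ne_of_ne (Ne.symm hw) (Ne.symm hw')).symm
      · apply hinj
        rw [h2]
        exact (Equiv.swap_apply_left w w').symm
  have hzero : (univ.filter fun π : Perm (Fin n) => π j = v ∧ π l = v).card = 0 := by
    rw [Finset.card_eq_zero, Finset.filter_eq_empty_iff]
    rintro π _ ⟨h1, h2⟩
    exact hjl (π.injective (h1.trans h2.symm))
  have hsum : (univ.filter fun π : Perm (Fin n) => π j = v).card
      = ∑ x : Fin n, (univ.filter fun π : Perm (Fin n) => π j = v ∧ π l = x).card := by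
    rw [Finset.card_eq_sum_card_fiberwise (f := fun π : Perm (Fin n) => π l)
      (fun π _ => Finset.mem_univ _)]
    apply Finset.sum_congr rfl
    intro x _
    congr 1
    ext π
    simp [and_assoc, and_comm]
  have hn2 : 2 ≤ n := by
    have : 1 < Fintype.card (Fin n) := Fintype.one_lt_card_iff.mpr ⟨j, l, hjl⟩
    simp at this; omega
  have key : (n-1).factorial
      = (n-1) * (univ.filter fun π : Perm (Fin n) => π j = v ∧ π l = w).card := by
    rw [← fiber_one n j v, hsum, ← Finset.sum_erase_add _ _ (Finset.mem_univ v), hzero,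
      add_zero, Finset.sum_congr rfl
        (fun x hx => hconst x w (Finset.ne_of_mem_erase hx) hvw.symm),
      Finset.sum_const, Finset.card_erase_of_mem (Finset.mem_univ v), Finset.card_univ,
      Fintype.card_fin, smul_eq_mul]
  have hfac : (n-1).factorial = (n-1) * (n-2).factorial := by
    obtain ⟨m, rfl⟩ : ∃ m, n = m + 2 := ⟨n - 2, by omega⟩
    simp [Nat.factorial_succ]
  have hpos : 0 < n - 1 := by omega
  exact Nat.eq_of_mul_eq_mul_left hpos (key.symm.trans hfac)

lemma moment_one (n : ℕ) (A B : Finset (Fin n)) :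
    ∑ π : Perm (Fin n), ∑ v ∈ A, ∑ j ∈ B, (if π j = v then (1:ℕ) else 0)
      = A.card * (B.card * (n-1).factorial) := by
  rw [Finset.sum_comm]
  rw [Finset.sum_congr rfl (fun v _ => Finset.sum_comm)]
  have h1 : ∀ v ∈ A, ∀ j ∈ B,
      ∑ π : Perm (Fin n), (if π j = v then (1:ℕ) else 0) = (n-1).factorial := by
    intro v _ j _
    rw [← Finset.card_filter]
    exact fiber_one n j v
  rw [Finset.sum_congr rfl (fun v hv => Finset.sum_congr rfl (h1 v hv))]
  simp [mul_comm]

lemma moment_two (n : ℕ) (A B : Finset (Fin n)) :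
    ∑ π : Perm (Fin n), (∑ v ∈ A, ∑ j ∈ B, (if π j = v then (1:ℕ) else 0))^2
      = A.card * (B.card * (n-1).factorial)
        + (A.card * (A.card - 1)) * ((B.card * (B.card - 1)) * (n-2).factorial) := by
  have expand : ∀ π : Perm (Fin n),
      (∑ v ∈ A, ∑ j ∈ B, (if π j = v then (1:ℕ) else 0))^2
      = ∑ v ∈ A, ∑ w ∈ A, ∑ j ∈ B, ∑ l ∈ B, (if π j = v ∧ π l = w then (1:ℕ) else 0) := by
    intro π
    rw [sq, Finset.sum_mul_sum]
    refine Finset.sum_congr rfl fun v _ => Finset.sum_congr rfl fun w _ => ?_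
    rw [Finset.sum_mul_sum]
    refine Finset.sum_congr rfl fun j _ => Finset.sum_congr rfl fun l _ => ?_
    by_cases h1 : π j = v <;> by_cases h2 : π l = w <;> simp [h1, h2]
  rw [Finset.sum_congr rfl (fun π _ => expand π)]
  have swap4 : ∀ (F : Perm (Fin n) → Fin n → Fin n → Fin n → Fin n → ℕ),
      ∑ π : Perm (Fin n), ∑ v ∈ A, ∑ w ∈ A, ∑ j ∈ B, ∑ l ∈ B, F π v w j l
      = ∑ v ∈ A, ∑ w ∈ A, ∑ j ∈ B, ∑ l ∈ B, ∑ π : Perm (Fin n), F π v w j l := by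
    intro F
    rw [Finset.sum_comm]
    refine Finset.sum_congr rfl fun v _ => ?_
    rw [Finset.sum_comm]
    refine Finset.sum_congr rfl fun w _ => ?_
    rw [Finset.sum_comm]
    refine Finset.sum_congr rfl fun j _ => ?_
    rw [Finset.sum_comm]
  rw [swap4]
  have hπsum : ∀ v w j l : Fin n,
      ∑ π : Perm (Fin n), (if π j = v ∧ π l = w then (1:ℕ) else 0)
      = (univ.filter fun π : Perm (Fin n) => π j = v ∧ π l = w).card := by
    intro v w j l; rw [Finset.card_filter]
  -- inner double sum over j, l
  have inner_same : ∀ v : Fin n,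
      ∑ j ∈ B, ∑ l ∈ B,
        (univ.filter fun π : Perm (Fin n) => π j = v ∧ π l = v).card
      = B.card * (n-1).factorial := by
    intro v
    have hval : ∀ j l : Fin n,
        (univ.filter fun π : Perm (Fin n) => π j = v ∧ π l = v).card
        = if j = l then (n-1).factorial else 0 := by
      intro j l
      split_ifs with h
      · subst h
        have : (univ.filter fun π : Perm (Fin n) => π j = v ∧ π j = v)
            = univ.filter fun π : Perm (Fin n) => π j = v := by
          apply Finset.filter_congr; intro π _; simp
        rw [this, fiber_one]
      · rw [Finset.card_eq_zero, Finset.filter_eq_empty_iff]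
        rintro π _ ⟨h1, h2⟩
        exact h (π.injective (h1.trans h2.symm))
    rw [Finset.sum_congr rfl (fun j _ => Finset.sum_congr rfl (fun l _ => hval j l))]
    rw [Finset.sum_congr rfl (fun j hj => Finset.sum_ite_eq B j (fun _ => (n-1).factorial))]
    rw [Finset.sum_congr rfl (fun j hj => if_pos hj)]
    simp [mul_comm]
  have inner_diff : ∀ v w : Fin n, v ≠ w →
      ∑ j ∈ B, ∑ l ∈ B,
        (univ.filter fun π : Perm (Fin n) => π j = v ∧ π l = w).card
      = (B.card * (B.card - 1)) * (n-2).factorial := by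
    intro v w hvw
    have hval : ∀ j l : Fin n,
        (univ.filter fun π : Perm (Fin n) => π j = v ∧ π l = w).card
        = if j = l then 0 else (n-2).factorial := by
      intro j l
      split_ifs with h
      · subst h
        rw [Finset.card_eq_zero, Finset.filter_eq_empty_iff]
        rintro π _ ⟨h1, h2⟩
        exact hvw (h1.symm.trans h2)
      · exact fiber_two n h hvw
    rw [Finset.sum_congr rfl (fun j _ => Finset.sum_congr rfl (fun l _ => hval j l))]
    have hinner : ∀ j ∈ B, ∑ l ∈ B, (if j = l then 0 else (n-2).factorial)
        = (B.card - 1) * (n-2).factorial := by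
      intro j hj
      rw [← Finset.add_sum_erase B _ hj, if_pos rfl, zero_add]
      rw [Finset.sum_congr rfl
        (fun l hl => if_neg (Ne.symm (Finset.mem_erase.mp hl).1))]
      rw [Finset.sum_const, Finset.card_erase_of_mem hj, smul_eq_mul]
    rw [Finset.sum_congr rfl hinner, Finset.sum_const, smul_eq_mul, mul_assoc]
  -- outer double sum over v, w
  rw [Finset.sum_congr rfl (fun v hv => Finset.sum_congr rfl
    (fun w hw => Finset.sum_congr rfl (fun j _ => Finset.sum_congr rfl
      (fun l _ => hπsum v w j l))))]
  have houter : ∀ v ∈ A,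
      ∑ w ∈ A, ∑ j ∈ B, ∑ l ∈ B,
        (univ.filter fun π : Perm (Fin n) => π j = v ∧ π l = w).card
      = B.card * (n-1).factorial
        + (A.card - 1) * ((B.card * (B.card - 1)) * (n-2).factorial) := by
    intro v hv
    rw [← Finset.add_sum_erase A _ hv, inner_same v]
    congr 1
    rw [Finset.sum_congr rfl
      (fun w hw => inner_diff v w (Ne.symm (Finset.mem_erase.mp hw).1))]
    rw [Finset.sum_const, Finset.card_erase_of_mem hv, smul_eq_mul]
  rw [Finset.sum_congr rfl houter, Finset.sum_const, smul_eq_mul]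
  ring

lemma X_as_sum (n Δ k : ℕ) (π : Perm (Fin n)) :
    (univ.filter fun v : Fin n => (v:ℕ) < Δ ∧ ((π.symm v : Fin n) : ℕ) < k).card
    = ∑ v ∈ univ.filter (fun v : Fin n => (v:ℕ) < Δ),
        ∑ j ∈ univ.filter (fun j : Fin n => (j:ℕ) < k), (if π j = v then (1:ℕ) else 0) := by
  rw [← Finset.filter_filter, Finset.card_filter]
  refine Finset.sum_congr rfl fun v _ => ?_
  have h1 : ∀ j : Fin n, (π j = v) ↔ (j = π.symm v) := fun j =>
    Equiv.apply_eq_iff_eq_symm_apply π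
  rw [Finset.sum_congr rfl (fun j _ => by rw [if_congr (h1 j) rfl rfl])]
  rw [Finset.sum_ite_eq' (univ.filter (fun j : Fin n => (j:ℕ) < k)) (π.symm v) (fun _ => 1)]
  by_cases h : ((π.symm v : Fin n) : ℕ) < k
  · rw [if_pos h, if_pos (by simp [h])]
  · rw [if_neg h, if_neg (by simp [h])]

lemma pure_real_bound (N F a b d e : ℝ) (hN2 : 2 ≤ N) (hF0 : 0 ≤ F) (ha0 : 0 ≤ a)
    (hb0 : 0 ≤ b) (hd0 : 0 ≤ d) (he0 : 0 ≤ e) (haN : a ≤ N) (hbN : b ≤ N)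
    (hkey : N * (d * e) ≤ (N - 1) * (a * b)) :
    (a * (b * ((N-1) * F)) + (a * d) * ((b * e) * F))
      - 2 * (b * a / N) * (a * (b * ((N-1) * F)))
      + (N * ((N-1) * F)) * (b * a / N)^2
    ≤ a * (N * ((N-1) * F)) := by
  have hN0 : (0:ℝ) < N := by linarith
  have h5 : (N * (d * e)) * (a * b * F * N) ≤ ((N - 1) * (a * b)) * (a * b * F * N) := by
    apply mul_le_mul_of_nonneg_right hkey
    positivity
  have h6 : 0 ≤ N^2 * a * (N - 1) * F * (N - b) := by
    have q1 : (0:ℝ) ≤ N - 1 := by linarith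
    have q2 : (0:ℝ) ≤ N - b := by linarith
    exact mul_nonneg (mul_nonneg (mul_nonneg (mul_nonneg (sq_nonneg N) ha0) q1) hF0) q2
  rw [div_pow, ← sub_nonneg]
  have hexp : a * (N * ((N-1) * F))
      - ((a * (b * ((N-1) * F)) + (a * d) * ((b * e) * F))
        - 2 * (b * a / N) * (a * (b * ((N-1) * F)))
        + (N * ((N-1) * F)) * ((b * a)^2 / N^2))
      = (N^3 * a * (N-1) * F - (N^2 * (a * (b * ((N-1) * F)) + (a * d) * ((b * e) * F))
          - 2 * N * (b * a) * (a * (b * ((N-1) * F)))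
          + N * ((N-1) * F) * (b * a)^2)) / N^2 := by
    field_simp
  rw [hexp]
  apply div_nonneg _ (by positivity)
  nlinarith [h5, h6]

lemma key_nat_bound (Δ k m : ℕ) (hΔ : Δ ≤ m + 2) (hk : k ≤ m + 2) :
    ((m:ℝ)+2) * (((Δ - 1 : ℕ):ℝ) * ((k - 1 : ℕ):ℝ))
      ≤ (((m:ℝ)+2) - 1) * ((Δ:ℝ) * (k:ℝ)) := by
  have hN1 : (0:ℝ) ≤ ((m:ℝ)+2) - 1 := by
    have := Nat.cast_nonneg (α := ℝ) m
    linarith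
  rcases Nat.eq_zero_or_pos Δ with h0 | h1
  · subst h0
    norm_num
  rcases Nat.eq_zero_or_pos k with h0 | h1'
  · subst h0
    norm_num
  · have hda : ((Δ - 1 : ℕ):ℝ) = (Δ:ℝ) - 1 := by push_cast [Nat.cast_sub h1]; ring
    have heb : ((k - 1 : ℕ):ℝ) = (k:ℝ) - 1 := by push_cast [Nat.cast_sub h1']; ring
    have ha1 : (1:ℝ) ≤ (Δ:ℝ) := by exact_mod_cast h1
    have hb1 : (1:ℝ) ≤ (k:ℝ) := by exact_mod_cast h1'
    have haN : (Δ:ℝ) ≤ (m:ℝ)+2 := by exact_mod_cast hΔ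
    have hbN : (k:ℝ) ≤ (m:ℝ)+2 := by exact_mod_cast hk
    rw [hda, heb]
    nlinarith [mul_le_mul_of_nonneg_right haN (by positivity : (0:ℝ) ≤ (k:ℝ)),
      mul_le_mul_of_nonneg_left hb1 (by positivity : (0:ℝ) ≤ (m:ℝ)+2)]

lemma final_real_bound (Δ k m : ℕ) (hΔ : Δ ≤ m + 2) (hk : k ≤ m + 2) :
    ((Δ * (k * ((m+2)-1).factorial) + (Δ * (Δ - 1)) * ((k * (k - 1)) * ((m+2)-2).factorial) : ℕ) : ℝ)
      - 2 * ((k:ℝ) * (Δ:ℝ) / ((m+2 : ℕ):ℝ)) * ((Δ * (k * ((m+2)-1).factorial) : ℕ) : ℝ)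
      + (((m+2).factorial : ℕ) : ℝ) * ((k:ℝ) * (Δ:ℝ) / ((m+2 : ℕ):ℝ))^2
    ≤ (Δ:ℝ) * ((m+2).factorial : ℕ) := by
  have h1 : (m+2) - 1 = m + 1 := rfl
  have h2 : (m+2) - 2 = m := rfl
  rw [h1, h2]
  have hmain := pure_real_bound ((m:ℝ)+2) (m.factorial : ℝ) (Δ:ℝ) (k:ℝ)
    ((Δ - 1 : ℕ):ℝ) ((k - 1 : ℕ):ℝ)
    (by linarith [Nat.cast_nonneg (α := ℝ) m]) (by positivity) (by positivity) (by positivity)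
    (by positivity) (by positivity) (by exact_mod_cast hΔ) (by exact_mod_cast hk)
    (key_nat_bound Δ k m hΔ hk)
  have hF1 : ((m+1).factorial : ℝ) = (((m:ℝ)+2) - 1) * (m.factorial : ℝ) := by
    push_cast [Nat.factorial_succ]
    ring
  have hFn : ((m+2).factorial : ℝ) = ((m:ℝ)+2) * ((((m:ℝ)+2) - 1) * (m.factorial : ℝ)) := by
    push_cast [Nat.factorial_succ]
    ring
  calc ((Δ * (k * (m+1).factorial) + (Δ * (Δ - 1)) * ((k * (k - 1)) * m.factorial) : ℕ) : ℝ)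
      - 2 * ((k:ℝ) * (Δ:ℝ) / ((m+2 : ℕ):ℝ)) * ((Δ * (k * (m+1).factorial) : ℕ) : ℝ)
      + (((m+2).factorial : ℕ) : ℝ) * ((k:ℝ) * (Δ:ℝ) / ((m+2 : ℕ):ℝ))^2
      = ((Δ:ℝ) * ((k:ℝ) * ((((m:ℝ)+2) - 1) * (m.factorial:ℝ)))
          + ((Δ:ℝ) * ((Δ - 1:ℕ):ℝ)) * (((k:ℝ) * ((k - 1:ℕ):ℝ)) * (m.factorial:ℝ)))
        - 2 * ((k:ℝ) * (Δ:ℝ) / ((m:ℝ)+2))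
            * ((Δ:ℝ) * ((k:ℝ) * ((((m:ℝ)+2) - 1) * (m.factorial:ℝ))))
        + (((m:ℝ)+2) * ((((m:ℝ)+2) - 1) * (m.factorial:ℝ)))
            * ((k:ℝ) * (Δ:ℝ) / ((m:ℝ)+2))^2 := by
        push_cast [Nat.factorial_succ]
        ring
    _ ≤ (Δ:ℝ) * (((m:ℝ)+2) * ((((m:ℝ)+2) - 1) * (m.factorial:ℝ))) := hmain
    _ = (Δ:ℝ) * ((m+2).factorial : ℕ) := by push_cast [Nat.factorial_succ]; ring

lemma var_bound (n Δ k : ℕ) (hΔ : Δ ≤ n) (hk : k ≤ n) (h2 : 2 ≤ n) :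
    ∑ π : Perm (Fin n),
      ((((univ.filter fun v : Fin n =>
          (v:ℕ) < Δ ∧ ((π.symm v : Fin n) : ℕ) < k).card : ℕ) : ℝ) - (k:ℝ)*Δ/n)^2
      ≤ (Δ:ℝ) * n.factorial := by
  classical
  set A := univ.filter (fun v : Fin n => (v:ℕ) < Δ) with hAdef
  set B := univ.filter (fun j : Fin n => (j:ℕ) < k) with hBdef
  have hA : A.card = Δ := card_filter_coe_lt n Δ hΔ
  have hB : B.card = k := card_filter_coe_lt n k hk
  set Xn : Perm (Fin n) → ℕ := fun π =>
    (univ.filter fun v : Fin n => (v:ℕ) < Δ ∧ ((π.symm v : Fin n) : ℕ) < k).card with hXdef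
  have hXs : ∀ π : Perm (Fin n), Xn π = ∑ v ∈ A, ∑ j ∈ B, (if π j = v then (1:ℕ) else 0) :=
    fun π => X_as_sum n Δ k π
  have hS1 : ∑ π : Perm (Fin n), Xn π = Δ * (k * (n-1).factorial) := by
    rw [Finset.sum_congr rfl (fun π _ => hXs π), moment_one, hA, hB]
  have hS2 : ∑ π : Perm (Fin n), (Xn π)^2
      = Δ * (k * (n-1).factorial)
        + (Δ * (Δ - 1)) * ((k * (k - 1)) * (n-2).factorial) := by
    rw [Finset.sum_congr rfl (fun π _ => by rw [hXs π]), moment_two, hA, hB]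
  set μ : ℝ := (k:ℝ)*Δ/n with hμdef
  have hcardG : (Finset.univ : Finset (Perm (Fin n))).card = n.factorial := by
    rw [Finset.card_univ, Fintype.card_perm, Fintype.card_fin]
  have expand : ∑ π : Perm (Fin n), ((Xn π : ℝ) - μ)^2
      = ((∑ π : Perm (Fin n), (Xn π)^2 : ℕ) : ℝ)
        - 2*μ*((∑ π : Perm (Fin n), Xn π : ℕ) : ℝ) + (n.factorial : ℝ) * μ^2 := by
    push_cast
    rw [Finset.sum_congr rfl (fun π _ => by ring :
      ∀ π ∈ (Finset.univ : Finset (Perm (Fin n))),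
        ((Xn π : ℝ) - μ)^2 = (Xn π:ℝ)^2 - 2*μ*(Xn π:ℝ) + μ^2)]
    rw [Finset.sum_add_distrib, Finset.sum_sub_distrib, ← Finset.mul_sum,
      Finset.sum_const, hcardG, nsmul_eq_mul]
  rw [expand, hS1, hS2]
  obtain ⟨m, rfl⟩ : ∃ m, n = m + 2 := ⟨n - 2, by omega⟩
  exact final_real_bound Δ k m hΔ hk

lemma cheby (n Δ k : ℕ) (hΔ : Δ ≤ n) (hk : k ≤ n) (h2 : 2 ≤ n) (t : ℝ) (ht : 0 < t) :
    ((Finset.univ.filter fun π : Equiv.Perm (Fin n) =>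
        (((univ.filter fun v : Fin n =>
            (v:ℕ) < Δ ∧ ((π.symm v : Fin n) : ℕ) < k).card : ℕ) : ℝ)
          < (k:ℝ)*Δ/n - t).card : ℝ) * t^2 ≤ (Δ:ℝ) * n.factorial := by
  classical
  set Bad := Finset.univ.filter fun π : Equiv.Perm (Fin n) =>
      (((univ.filter fun v : Fin n =>
          (v:ℕ) < Δ ∧ ((π.symm v : Fin n) : ℕ) < k).card : ℕ) : ℝ)
        < (k:ℝ)*Δ/n - t with hBad
  have h1 : ∀ π ∈ Bad, t^2 ≤
      ((((univ.filter fun v : Fin n =>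
          (v:ℕ) < Δ ∧ ((π.symm v : Fin n) : ℕ) < k).card : ℕ) : ℝ) - (k:ℝ)*Δ/n)^2 := by
    intro π hπ
    rw [hBad, Finset.mem_filter] at hπ
    nlinarith [hπ.2, ht]
  calc (Bad.card : ℝ) * t^2 = ∑ _π ∈ Bad, t^2 := by rw [Finset.sum_const, nsmul_eq_mul]
    _ ≤ ∑ π ∈ Bad, ((((univ.filter fun v : Fin n =>
          (v:ℕ) < Δ ∧ ((π.symm v : Fin n) : ℕ) < k).card : ℕ) : ℝ) - (k:ℝ)*Δ/n)^2 :=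
        Finset.sum_le_sum h1
    _ ≤ ∑ π : Equiv.Perm (Fin n), ((((univ.filter fun v : Fin n =>
          (v:ℕ) < Δ ∧ ((π.symm v : Fin n) : ℕ) < k).card : ℕ) : ℝ) - (k:ℝ)*Δ/n)^2 :=
        Finset.sum_le_sum_of_subset_of_nonneg (Finset.subset_univ _)
          (fun i _ _ => sq_nonneg _)
    _ ≤ (Δ:ℝ) * n.factorial := var_bound n Δ k hΔ hk h2

theorem most_permutations_balanced (ε₂ : ℝ) (h0 : 0 < ε₂) (h1 : ε₂ < 1) :
    ∃ N₂ : ℕ, ∀ n Δ : ℕ, N₂ < Δ → Δ ≤ n →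
      (1 - ε₂) * (Nat.factorial n : ℝ) ≤
        ((Finset.univ.filter fun π : Equiv.Perm (Fin n) =>
            IsBalanced n Δ ε₂ π).card : ℝ) := by
  classical
  refine ⟨⌈(20:ℝ)/ε₂^4⌉₊, fun n Δ hN hΔn => ?_⟩
  have hε4 : (0:ℝ) < ε₂^4 := by positivity
  have hΔbig : (20:ℝ)/ε₂^4 ≤ (Δ:ℝ) := by
    have h := Nat.le_ceil ((20:ℝ)/ε₂^4)
    have : (⌈(20:ℝ)/ε₂^4⌉₊ : ℝ) ≤ (Δ:ℝ) := by exact_mod_cast hN.le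
    linarith
  have h20 : (20:ℝ) ≤ 20/ε₂^4 := by
    rw [le_div_iff₀ hε4]
    have hx0 : 0 ≤ ε₂^2 := sq_nonneg _
    have hx1 : ε₂^2 ≤ 1 := by nlinarith
    have hp : ε₂^4 ≤ 1 := by nlinarith [hx0, hx1]
    nlinarith [hp]
  have hΔ2 : 2 ≤ Δ := by
    have : (2:ℝ) ≤ (Δ:ℝ) := by linarith
    exact_mod_cast this
  have h2n : 2 ≤ n := le_trans hΔ2 hΔn
  have h2nr : (2:ℝ) ≤ (n:ℝ) := by exact_mod_cast h2n
  have hn0 : (0:ℝ) < n := by linarith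
  have hΔ0 : (0:ℝ) < Δ := by
    have : (2:ℝ) ≤ (Δ:ℝ) := by linarith
    linarith
  -- the grid step
  set s : ℕ := max 1 ⌊ε₂ * n / 2⌋₊ with hs
  have hs1 : 1 ≤ s := le_max_left _ _
  have hs0 : (0:ℝ) < s := by exact_mod_cast hs1
  have hs_le : (s:ℝ) - 1 ≤ ε₂ * n / 2 := by
    have h1' : s ≤ ⌊ε₂ * n / 2⌋₊ + 1 := max_le (by omega) (Nat.le_succ _)
    have h2' : ((⌊ε₂ * n / 2⌋₊ : ℕ):ℝ) ≤ ε₂ * n / 2 := Nat.floor_le (by positivity)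
    have h3' : (s:ℝ) ≤ ((⌊ε₂ * n / 2⌋₊ : ℕ):ℝ) + 1 := by exact_mod_cast h1'
    linarith
  set t : ℝ := ε₂ * Δ / 2 with htdef
  have ht0 : (0:ℝ) < t := by rw [htdef]; positivity
  -- per grid point bound
  have hcheb : ∀ i : ℕ, i ∈ Finset.range (n / s + 1) →
      ((Finset.univ.filter fun π : Equiv.Perm (Fin n) =>
        (((univ.filter fun v : Fin n =>
            (v:ℕ) < Δ ∧ ((π.symm v : Fin n) : ℕ) < s * i).card : ℕ) : ℝ)
          < ((s*i : ℕ):ℝ)*Δ/n - t).card : ℝ) ≤ (Δ:ℝ) * n.factorial / t^2 := by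
    intro i hi
    have hki : s * i ≤ n := by
      have hdv : i ≤ n / s := by
        have := Finset.mem_range.mp hi
        omega
      calc s * i ≤ s * (n / s) := Nat.mul_le_mul_left s hdv
        _ ≤ n := Nat.mul_div_le n s
    have hc := cheby n Δ (s*i) hΔn hki h2n t ht0
    rw [le_div_iff₀ (by positivity)]
    exact hc
  -- every permutation outside all bad sets is balanced
  have hsubset : (Finset.univ.filter fun π : Equiv.Perm (Fin n) =>
        ¬ IsBalanced n Δ ε₂ π)
      ⊆ (Finset.range (n / s + 1)).biUnion (fun i =>
          Finset.univ.filter fun π : Equiv.Perm (Fin n) =>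
            (((univ.filter fun v : Fin n =>
                (v:ℕ) < Δ ∧ ((π.symm v : Fin n) : ℕ) < s * i).card : ℕ) : ℝ)
              < ((s*i : ℕ):ℝ)*Δ/n - t) := by
    intro π hπ
    rw [Finset.mem_filter] at hπ
    by_contra hmem
    rw [Finset.mem_biUnion] at hmem
    push_neg at hmem
    apply hπ.2
    intro k hk
    -- grid point below k
    set i : ℕ := k / s with hi
    have hiI : i ∈ Finset.range (n / s + 1) := by
      rw [Finset.mem_range, hi]
      have := Nat.div_le_div_right (c := s) hk
      omega
    have hnot := hmem i hiI
    rw [Finset.mem_filter] at hnot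
    push_neg at hnot
    have hXi : ((s*i : ℕ):ℝ)*Δ/n - t ≤
        (((univ.filter fun v : Fin n =>
            (v:ℕ) < Δ ∧ ((π.symm v : Fin n) : ℕ) < s * i).card : ℕ) : ℝ) :=
      hnot (Finset.mem_univ π)
    have hki' : s * i ≤ k := by rw [hi, mul_comm]; exact Nat.div_mul_le_self k s
    have hmono : ((univ.filter fun v : Fin n =>
            (v:ℕ) < Δ ∧ ((π.symm v : Fin n) : ℕ) < s * i).card : ℕ)
        ≤ ((univ.filter fun v : Fin n =>
            (v:ℕ) < Δ ∧ ((π.symm v : Fin n) : ℕ) < k).card : ℕ) := by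
      apply Finset.card_le_card
      intro v hv
      simp only [Finset.mem_filter] at hv ⊢
      exact ⟨hv.1, hv.2.1, lt_of_lt_of_le hv.2.2 hki'⟩
    have hslack : (k:ℝ) - ((s*i : ℕ):ℝ) ≤ ε₂ * n / 2 := by
      have hmod : k - s * i = k % s := by
        rw [hi]
        have := Nat.mod_add_div k s
        omega
      have hmodlt : k % s ≤ s - 1 := by
        have := Nat.mod_lt k (show 0 < s by omega)
        omega
      have hq : ((k - s*i : ℕ):ℝ) ≤ (s:ℝ) - 1 := by
        rw [hmod]
        have hq2 : ((k % s : ℕ):ℝ) ≤ ((s - 1 : ℕ):ℝ) := by exact_mod_cast hmodlt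
        calc ((k % s : ℕ):ℝ) ≤ ((s - 1 : ℕ):ℝ) := hq2
          _ ≤ (s:ℝ) - 1 := by
            rw [Nat.cast_sub hs1]
            norm_num
      have hcast : ((k - s*i : ℕ):ℝ) = (k:ℝ) - ((s*i:ℕ):ℝ) := by
        rw [Nat.cast_sub hki']
      linarith [hs_le]
    have hchain : ((k : ℝ) / n - ε₂) * Δ ≤ ((s*i : ℕ):ℝ)*Δ/n - t := by
      rw [htdef]
      have hd : ((k:ℝ) - ((s*i:ℕ):ℝ)) / n ≤ ε₂ / 2 := by
        rw [div_le_iff₀ hn0]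
        calc (k:ℝ) - ((s*i:ℕ):ℝ) ≤ ε₂ * n / 2 := hslack
          _ = ε₂ / 2 * n := by ring
      have hstep : (k:ℝ)/n - ε₂ ≤ ((s*i:ℕ):ℝ)/n - ε₂/2 := by
        have expand : (k:ℝ)/n = ((s*i:ℕ):ℝ)/n + ((k:ℝ) - ((s*i:ℕ):ℝ))/n := by ring
        rw [expand]
        linarith
      calc ((k : ℝ) / n - ε₂) * Δ ≤ (((s*i:ℕ):ℝ)/n - ε₂/2) * Δ := by
            apply mul_le_mul_of_nonneg_right hstep (le_of_lt hΔ0)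
        _ = ((s*i : ℕ):ℝ)*Δ/n - ε₂ * Δ / 2 := by ring
    calc ((k : ℝ) / n - ε₂) * Δ ≤ ((s*i : ℕ):ℝ)*Δ/n - t := hchain
      _ ≤ _ := hXi
      _ ≤ _ := by exact_mod_cast hmono
  -- counting
  set Bad := Finset.univ.filter (fun π : Equiv.Perm (Fin n) => ¬ IsBalanced n Δ ε₂ π)
    with hBaddef
  have hsplit : (Finset.univ.filter fun π : Equiv.Perm (Fin n) =>
      IsBalanced n Δ ε₂ π).card + Bad.card = n.factorial := by
    rw [hBaddef, Finset.card_filter_add_card_filter_not, Finset.card_univ,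
      Fintype.card_perm, Fintype.card_fin]
  have hbadcard : (Bad.card : ℝ) ≤ ((n/s+1 : ℕ):ℝ) * ((Δ:ℝ) * n.factorial / t^2) := by
    have hb1 : Bad.card ≤ ∑ i ∈ Finset.range (n / s + 1),
        (Finset.univ.filter fun π : Equiv.Perm (Fin n) =>
            (((univ.filter fun v : Fin n =>
                (v:ℕ) < Δ ∧ ((π.symm v : Fin n) : ℕ) < s * i).card : ℕ) : ℝ)
              < ((s*i : ℕ):ℝ)*Δ/n - t).card :=
      le_trans (Finset.card_le_card hsubset) (Finset.card_biUnion_le)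
    have hb2 : (Bad.card : ℝ) ≤ ∑ i ∈ Finset.range (n / s + 1),
        ((Finset.univ.filter fun π : Equiv.Perm (Fin n) =>
            (((univ.filter fun v : Fin n =>
                (v:ℕ) < Δ ∧ ((π.symm v : Fin n) : ℕ) < s * i).card : ℕ) : ℝ)
              < ((s*i : ℕ):ℝ)*Δ/n - t).card : ℝ) := by
      push_cast
      exact_mod_cast hb1
    calc (Bad.card : ℝ) ≤ _ := hb2
      _ ≤ ∑ _i ∈ Finset.range (n / s + 1), ((Δ:ℝ) * n.factorial / t^2) :=
          Finset.sum_le_sum hcheb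
      _ = ((n/s+1 : ℕ):ℝ) * ((Δ:ℝ) * n.factorial / t^2) := by
          rw [Finset.sum_const, Finset.card_range, nsmul_eq_mul]
          try push_cast
          try ring
  have hgrid : ((n/s : ℕ):ℝ) ≤ 4/ε₂ := by
    by_cases hc : ε₂ * n / 2 < 2
    · have hn4 : (n:ℝ) < 4/ε₂ := by
        rw [lt_div_iff₀ h0]
        nlinarith [hc]
      calc ((n/s : ℕ):ℝ) ≤ (n:ℝ) := by exact_mod_cast Nat.div_le_self n s
        _ ≤ 4/ε₂ := le_of_lt hn4
    · push_neg at hc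
      have hfl : 2 ≤ ⌊ε₂*n/2⌋₊ := Nat.le_floor (by exact_mod_cast hc)
      have hseq : s = ⌊ε₂*n/2⌋₊ := max_eq_right (by omega)
      have hlt : ε₂*n/2 < ((⌊ε₂*n/2⌋₊ : ℕ):ℝ) + 1 := Nat.lt_floor_add_one _
      have hsr : ε₂*n/4 ≤ (s:ℝ) := by
        rw [hseq]
        have h4 : 4 ≤ ε₂ * n := by linarith
        have : ε₂*n/2 - 1 ≤ ((⌊ε₂*n/2⌋₊ : ℕ):ℝ) := by linarith
        linarith
      have hsr0 : (0:ℝ) < ε₂*n/4 := by positivity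
      calc ((n/s : ℕ):ℝ) ≤ (n:ℝ)/(s:ℝ) := Nat.cast_div_le
        _ ≤ (n:ℝ)/(ε₂*n/4) := by
            apply div_le_div_of_nonneg_left (by positivity) hsr0 hsr
        _ = 4/ε₂ := by
            field_simp
  have hcount : ((n/s+1 : ℕ):ℝ) * ((Δ:ℝ) * n.factorial / t^2) ≤ ε₂ * n.factorial := by
    have hone : (1:ℝ) ≤ 1/ε₂ := by
      rw [le_div_iff₀ h0]
      linarith
    have hA : ((n/s+1 : ℕ):ℝ) ≤ 5/ε₂ := by
      push_cast
      have : (4:ℝ)/ε₂ + 1 ≤ 4/ε₂ + 1/ε₂ := by linarith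
      have h5 : (4:ℝ)/ε₂ + 1/ε₂ = 5/ε₂ := by ring
      linarith [hgrid]
    have hB : (Δ:ℝ) * n.factorial / t^2 = 4 * n.factorial / (ε₂^2 * Δ) := by
      rw [htdef]
      field_simp
      ring
    have hBpos : (0:ℝ) ≤ (Δ:ℝ) * n.factorial / t^2 := by positivity
    calc ((n/s+1 : ℕ):ℝ) * ((Δ:ℝ) * n.factorial / t^2)
        ≤ (5/ε₂) * ((Δ:ℝ) * n.factorial / t^2) :=
          mul_le_mul_of_nonneg_right hA hBpos
      _ = (5/ε₂) * (4 * n.factorial / (ε₂^2 * Δ)) := by rw [hB]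
      _ = 20 * n.factorial / (ε₂^3 * Δ) := by
          rw [div_mul_div_comm]
          congr 1 <;> ring
      _ ≤ ε₂ * n.factorial := by
          rw [div_le_iff₀ (by positivity)]
          have h20Δ : 20 ≤ ε₂^4 * Δ := by
            rw [div_le_iff₀ hε4] at hΔbig
            linarith
          have hfacpos : (0:ℝ) ≤ (n.factorial : ℝ) := by positivity
          nlinarith [mul_le_mul_of_nonneg_right h20Δ hfacpos]
  have hgoodcast : ((Finset.univ.filter fun π : Equiv.Perm (Fin n) =>
      IsBalanced n Δ ε₂ π).card : ℝ) = (n.factorial : ℝ) - Bad.card := by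
    have := hsplit
    push_cast [← this]
    ring
  rw [hgoodcast]
  nlinarith [hbadcard, hcount]
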